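/- Let K ⊂ E be a compact product with equilibrium state μ, and let φ be a Hausdorff function. If the lower φ-density D_ = liminf_{ε→0} μ(B(x,ε))/φ(ε) (constant over x ∈ K) satisfies 0 < D_ < ∞, then the φ-packing premeasure P_0^φ(K) = lim_{ε→0} sup{Σ φ(|B_i|) : (B_i) disjoint open balls of radius ≤ ε in K} equals 1/D_. -/

import Mathlib

open scoped Classical ENNReal
open Filter Topology MeasureTheory

/-- The minimal index (counting from 1) at which two elements of the compact product
`K = ∏_k {1,…,n k}` differ. -/
noncomputable def chiK {n : ℕ → ℕ} (x y : ∀ k, Fin (n k)) : ℕ := sInf {k | x k ≠ y k} + 1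

/-- The ultrametric `δ(x,y) = 2^{-χ(x,y)}` on the compact product. -/
noncomputable def deltaK {n : ℕ → ℕ} (x y : ∀ k, Fin (n k)) : ℝ :=
  if x = y then 0 else (2 : ℝ) ^ (-(chiK x y : ℤ))

/-- The open `δ`-ball of center `x` and radius `ε`. -/
def BallK {n : ℕ → ℕ} (x : ∀ k, Fin (n k)) (ε : ℝ) : Set (∀ k, Fin (n k)) :=
  {y | deltaK x y < ε}

/-- The equilibrium state: the product of the uniform probability measures, characterized
by its values on cylinders. -/
def IsEquilibrium {n : ℕ → ℕ} (μ : Measure (∀ k, Fin (n k))) : Prop :=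
  ∀ (k : ℕ) (s : ∀ j, Fin (n j)),
    μ {y | ∀ j < k, y j = s j} = ∏ j ∈ Finset.range k, ((n j : ℝ≥0∞))⁻¹

/-- Hausdorff functions: continuous nondecreasing, vanishing exactly at `0`. -/
def IsHausdorffFn (φ : ℝ → ℝ) : Prop :=
  ContinuousOn φ (Set.Ici 0) ∧ MonotoneOn φ (Set.Ici 0) ∧ φ 0 = 0 ∧ ∀ ε > 0, 0 < φ ε

/-- The upper `φ`-density of `μ` at `x`. -/
noncomputable def upperDensK {n : ℕ → ℕ} (μ : Measure (∀ k, Fin (n k))) (φ : ℝ → ℝ)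
    (x : ∀ k, Fin (n k)) : ℝ≥0∞ :=
  Filter.limsup (fun ε : ℝ => μ (BallK x ε) / ENNReal.ofReal (φ ε)) (𝓝[>] 0)

/-- The lower `φ`-density of `μ` at `x`. -/
noncomputable def lowerDensK {n : ℕ → ℕ} (μ : Measure (∀ k, Fin (n k))) (φ : ℝ → ℝ)
    (x : ∀ k, Fin (n k)) : ℝ≥0∞ :=
  Filter.liminf (fun ε : ℝ => μ (BallK x ε) / ENNReal.ofReal (φ ε)) (𝓝[>] 0)

/-- The `φ`-Hausdorff measure on the compact product, defined via countable covers by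
open balls of radii at most `ε`, letting `ε → 0`. -/
noncomputable def HK {n : ℕ → ℕ} (φ : ℝ → ℝ) (S : Set (∀ k, Fin (n k))) : ℝ≥0∞ :=
  ⨆ (ε : ℝ) (_ : 0 < ε),
    ⨅ (c : ℕ → (∀ k, Fin (n k)) × ℝ)
      (_ : (∀ i, 0 ≤ (c i).2 ∧ (c i).2 ≤ ε) ∧ S ⊆ ⋃ i, BallK (c i).1 (c i).2),
      ∑' i, ENNReal.ofReal (φ (c i).2)

/-- The `φ`-packing premeasure on the compact product, defined via countable packs by
disjoint open balls centered in the set, of radii at most `ε`, letting `ε → 0`. -/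
noncomputable def PK0 {n : ℕ → ℕ} (φ : ℝ → ℝ) (S : Set (∀ k, Fin (n k))) : ℝ≥0∞ :=
  ⨅ (ε : ℝ) (_ : 0 < ε),
    ⨆ (c : ℕ → (∀ k, Fin (n k)) × ℝ)
      (_ : (∀ i, (c i).1 ∈ S ∧ 0 ≤ (c i).2 ∧ (c i).2 ≤ ε) ∧
        Pairwise fun i j => Disjoint (BallK (c i).1 (c i).2) (BallK (c j).1 (c j).2)),
      ∑' i, ENNReal.ofReal (φ (c i).2)

/-- The `φ`-packing measure on the compact product. -/
noncomputable def PK {n : ℕ → ℕ} (φ : ℝ → ℝ) (S : Set (∀ k, Fin (n k))) : ℝ≥0∞ :=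
  ⨅ (F : ℕ → Set (∀ k, Fin (n k))) (_ : S ⊆ ⋃ m, F m), ∑' m, PK0 φ (F m)

lemma deltaK_nonneg {n : ℕ → ℕ} (x y : ∀ k, Fin (n k)) : 0 ≤ deltaK x y := by
  unfold deltaK; split
  · exact le_refl _
  · positivity

lemma deltaK_eq_pow {n : ℕ → ℕ} {x y : ∀ k, Fin (n k)} (h : x ≠ y) :
    deltaK x y = (2⁻¹ : ℝ) ^ (chiK x y) := by
  rw [deltaK, if_neg h, zpow_neg, zpow_natCast, inv_pow]

lemma deltaK_le_half {n : ℕ → ℕ} (x y : ∀ k, Fin (n k)) : deltaK x y ≤ 2⁻¹ := by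
  by_cases h : x = y
  · simp [deltaK, h]
  · rw [deltaK_eq_pow h]
    calc (2⁻¹:ℝ)^(chiK x y) ≤ (2⁻¹:ℝ)^1 := by
          apply pow_le_pow_of_le_one (by norm_num) (by norm_num)
          exact Nat.le_add_left 1 _
      _ = 2⁻¹ := pow_one _

lemma ballK_empty {n : ℕ → ℕ} (x : ∀ k, Fin (n k)) {ε : ℝ} (h : ε ≤ 0) :
    BallK x ε = ∅ := by
  ext y; simp only [BallK, Set.mem_setOf_eq, Set.mem_empty_iff_false, iff_false, not_lt]
  exact h.trans (deltaK_nonneg x y)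

lemma ballK_univ {n : ℕ → ℕ} (x : ∀ k, Fin (n k)) {ε : ℝ} (h : (2⁻¹:ℝ) < ε) :
    BallK x ε = Set.univ := by
  ext y; simp only [BallK, Set.mem_setOf_eq, Set.mem_univ, iff_true]
  exact lt_of_le_of_lt (deltaK_le_half x y) h

lemma ballK_eq_cyl {n : ℕ → ℕ} (x : ∀ k, Fin (n k)) {ε : ℝ} {m : ℕ}
    (h1 : (2⁻¹:ℝ)^(m+1) < ε) (h2 : ε ≤ (2⁻¹:ℝ)^m) :
    BallK x ε = {y | ∀ j < m, y j = x j} := by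
  have hε : 0 < ε := lt_of_le_of_lt (by positivity) h1
  ext y
  simp only [BallK, Set.mem_setOf_eq]
  by_cases h : x = y
  · subst h
    simp [deltaK, hε]
  constructor
  · intro hd j hj
    rw [deltaK_eq_pow h] at hd
    have hlt : (2⁻¹:ℝ)^(chiK x y) < (2⁻¹:ℝ)^m := lt_of_lt_of_le hd h2
    have hmlt : m < chiK x y := by
      have := (pow_lt_pow_iff_right_of_lt_one₀ (by norm_num : (0:ℝ) < 2⁻¹) (by norm_num : (2⁻¹:ℝ) < 1)).mp hlt
      exact this
    have hj' : j < sInf {k | x k ≠ y k} := by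
      unfold chiK at hmlt; omega
    have hnm := Nat.notMem_of_lt_sInf hj'
    simp only [Set.mem_setOf_eq, not_not] at hnm
    exact hnm.symm
  · intro hc
    rw [deltaK_eq_pow h]
    have hne : {k | x k ≠ y k}.Nonempty := Function.ne_iff.mp h
    have hmem := Nat.sInf_mem hne
    have hge : m ≤ sInf {k | x k ≠ y k} := by
      by_contra hlt
      push_neg at hlt
      exact hmem (hc _ hlt).symm
    calc (2⁻¹:ℝ)^(chiK x y) ≤ (2⁻¹:ℝ)^(m+1) := by
          apply pow_le_pow_of_le_one (by norm_num) (by norm_num)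
          unfold chiK; omega
      _ < ε := h1

lemma exists_level {ε : ℝ} (h0 : 0 < ε) (h2 : ε ≤ 2⁻¹) :
    ∃ m : ℕ, (2⁻¹:ℝ)^(m+1) < ε ∧ ε ≤ (2⁻¹:ℝ)^m := by
  have hP : ∃ m : ℕ, (2⁻¹:ℝ)^(m+1) < ε := by
    obtain ⟨N, hN⟩ := exists_pow_lt_of_lt_one h0 (by norm_num : (2⁻¹:ℝ) < 1)
    refine ⟨N, lt_of_le_of_lt ?_ hN⟩
    apply pow_le_pow_of_le_one (by norm_num) (by norm_num) (Nat.le_succ N)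
  refine ⟨Nat.find hP, Nat.find_spec hP, ?_⟩
  rcases Nat.eq_zero_or_pos (Nat.find hP) with h | h
  · exfalso
    have := Nat.find_spec hP
    rw [h] at this
    simp only [zero_add, pow_one] at this
    linarith
  · have hmin := Nat.find_min hP (Nat.sub_lt h Nat.one_pos)
    push_neg at hmin
    have : Nat.find hP - 1 + 1 = Nat.find hP := Nat.succ_pred_eq_of_pos h
    rwa [this] at hmin

lemma cyl_measurable {n : ℕ → ℕ} (x : ∀ k, Fin (n k)) (m : ℕ) :
    MeasurableSet {y : ∀ k, Fin (n k) | ∀ j < m, y j = x j} := by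
  have : {y : ∀ k, Fin (n k) | ∀ j < m, y j = x j}
      = ⋂ j, ⋂ (_ : j < m), (fun y : ∀ k, Fin (n k) => y j) ⁻¹' {x j} := by
    ext y; simp
  rw [this]
  exact MeasurableSet.iInter fun j => MeasurableSet.iInter fun _ =>
    (measurable_pi_apply j) (measurableSet_singleton _)

lemma cyl_disjoint {n : ℕ → ℕ} {x y : ∀ k, Fin (n k)} {m j₀ : ℕ}
    (hj : j₀ < m) (h : x j₀ ≠ y j₀) :
    Disjoint {z : ∀ k, Fin (n k) | ∀ j < m, z j = x j}
      {z : ∀ k, Fin (n k) | ∀ j < m, z j = y j} := by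
  rw [Set.disjoint_left]
  intro z hz1 hz2
  exact h ((hz1 j₀ hj).symm.trans (hz2 j₀ hj))

lemma ballK_measurable {n : ℕ → ℕ} (x : ∀ k, Fin (n k)) (ε : ℝ) :
    MeasurableSet (BallK x ε) := by
  rcases le_or_gt ε 0 with h | h
  · rw [ballK_empty x h]; exact MeasurableSet.empty
  rcases le_or_gt ε 2⁻¹ with h' | h'
  · obtain ⟨m, h1, h2⟩ := exists_level h h'
    rw [ballK_eq_cyl x h1 h2]; exact cyl_measurable x m
  · rw [ballK_univ x h']; exact MeasurableSet.univ

section meas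
variable {n : ℕ → ℕ} {μ : Measure (∀ k, Fin (n k))}

lemma mu_univ (hn : ∀ k, 0 < n k) (hμ : IsEquilibrium μ) : μ Set.univ = 1 := by
  have := hμ 0 (fun j => ⟨0, hn j⟩)
  simpa using this

lemma mu_ball_eq (hμ : IsEquilibrium μ) {x : ∀ k, Fin (n k)} {ε : ℝ} {m : ℕ}
    (h1 : (2⁻¹:ℝ)^(m+1) < ε) (h2 : ε ≤ (2⁻¹:ℝ)^m) :
    μ (BallK x ε) = ∏ j ∈ Finset.range m, ((n j : ℝ≥0∞))⁻¹ := by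
  rw [ballK_eq_cyl x h1 h2]; exact hμ m x

lemma mu_ball_indep (hμ : IsEquilibrium μ) (x y : ∀ k, Fin (n k)) (ε : ℝ) :
    μ (BallK x ε) = μ (BallK y ε) := by
  rcases le_or_gt ε 0 with h | h
  · rw [ballK_empty x h, ballK_empty y h]
  rcases le_or_gt ε 2⁻¹ with h' | h'
  · obtain ⟨m, h1, h2⟩ := exists_level h h'
    rw [mu_ball_eq hμ h1 h2, mu_ball_eq hμ h1 h2]
  · rw [ballK_univ x h', ballK_univ y h']

lemma pack_sum_le_one (hn : ∀ k, 0 < n k) (hμ : IsEquilibrium μ) (c : ℕ → (∀ k, Fin (n k)) × ℝ)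
    (hdis : Pairwise fun i j => Disjoint (BallK (c i).1 (c i).2) (BallK (c j).1 (c j).2)) :
    ∑' i, μ (BallK (c i).1 (c i).2) ≤ 1 := by
  rw [← measure_iUnion hdis (fun i => ballK_measurable _ _)]
  rw [← mu_univ hn hμ]
  exact measure_mono (Set.subset_univ _)

end meas


/-- If the lower `φ`-density of the equilibrium state (constant over the compact product)
is positive and finite, then the `φ`-packing premeasure of the whole product is its
reciprocal. -/
theorem stmt12 (n : ℕ → ℕ) (hn : ∀ k, 0 < n k) (μ : Measure (∀ k, Fin (n k)))
    (hμ : IsEquilibrium μ) (φ : ℝ → ℝ) (hφ : IsHausdorffFn φ)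
    (D : ℝ≥0∞) (hD : ∀ x, lowerDensK μ φ x = D) (hD0 : 0 < D) (hDtop : D < ⊤) :
    PK0 φ (Set.univ : Set (∀ k, Fin (n k))) = D⁻¹ := by
  have x₀ : ∀ k, Fin (n k) := fun k => ⟨0, hn k⟩
  have hDf : Filter.liminf (fun r : ℝ => μ (BallK x₀ r) / ENNReal.ofReal (φ r))
      (𝓝[>] (0:ℝ)) = D := hD x₀
  refine le_antisymm ?_ ?_
  · -- upper bound : PK0 ≤ D⁻¹
    by_contra hcon
    push_neg at hcon
    obtain ⟨u, hu1, hu2⟩ := exists_between hcon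
    have hune0 : u ≠ 0 := by
      intro h; rw [h] at hu1; exact (not_lt_bot hu1).elim
    have hunetop : u ≠ ⊤ := hu2.ne_top
    set t := u⁻¹ with ht
    have htD : t < D := ENNReal.inv_lt_iff_inv_lt.mp hu1
    have ht0 : t ≠ 0 := ENNReal.inv_ne_zero.mpr hunetop
    have httop : t ≠ ⊤ := ENNReal.inv_ne_top.mpr hune0
    have hev : ∀ᶠ r in 𝓝[>] (0:ℝ),
        t < μ (BallK x₀ r) / ENNReal.ofReal (φ r) := by
      exact Filter.eventually_lt_of_lt_liminf (htD.trans_eq hDf.symm)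
    obtain ⟨ε₀, hε₀, hsub⟩ := mem_nhdsGT_iff_exists_Ioo_subset.mp hev
    rw [Set.mem_Ioi] at hε₀
    refine absurd ?_ (not_le.mpr hu2)
    have step1 : PK0 φ (Set.univ : Set (∀ k, Fin (n k))) ≤
        ⨆ (c : ℕ → (∀ k, Fin (n k)) × ℝ)
          (_ : (∀ i, (c i).1 ∈ (Set.univ : Set (∀ k, Fin (n k))) ∧
              0 ≤ (c i).2 ∧ (c i).2 ≤ ε₀/2) ∧
            Pairwise fun i j => Disjoint (BallK (c i).1 (c i).2) (BallK (c j).1 (c j).2)),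
          ∑' i, ENNReal.ofReal (φ (c i).2) := by
      exact iInf₂_le (ε₀/2) (by positivity)
    refine step1.trans (iSup₂_le fun c hc => ?_)
    obtain ⟨hci, hdis⟩ := hc
    have key : ∀ i, t * ENNReal.ofReal (φ (c i).2) ≤ μ (BallK (c i).1 (c i).2) := by
      intro i
      rcases eq_or_lt_of_le (hci i).2.1 with h0 | h0
      · rw [← h0]
        simp [hφ.2.2.1]
      · have hr : (c i).2 ∈ Set.Ioo (0:ℝ) ε₀ :=
          ⟨h0, lt_of_le_of_lt (hci i).2.2 (by linarith)⟩
        have hlt := hsub hr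
        simp only [Set.mem_setOf_eq] at hlt
        rw [mu_ball_indep hμ x₀ (c i).1 (c i).2] at hlt
        have hφ0 : ENNReal.ofReal (φ (c i).2) ≠ 0 := by
          simp only [ne_eq, ENNReal.ofReal_eq_zero, not_le]
          exact hφ.2.2.2 _ h0
        exact (ENNReal.lt_div_iff_mul_lt (Or.inl hφ0)
          (Or.inl ENNReal.ofReal_ne_top)).mp hlt |>.le
    have hsum : t * ∑' i, ENNReal.ofReal (φ (c i).2) ≤ 1 := by
      rw [← ENNReal.tsum_mul_left]
      exact le_trans (ENNReal.tsum_le_tsum key) (pack_sum_le_one hn hμ c hdis)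
    have : ∑' i, ENNReal.ofReal (φ (c i).2) ≤ t⁻¹ := by
      rw [mul_comm] at hsum
      exact ENNReal.le_inv_iff_mul_le.mpr hsum
    rwa [ht, inv_inv] at this
  · -- lower bound : D⁻¹ ≤ PK0
    refine le_iInf fun ε => le_iInf fun hε => ?_
    by_contra hcon
    push_neg at hcon
    obtain ⟨u, hu1, hu2⟩ := exists_between hcon
    have hune0 : u ≠ 0 := by
      intro h; rw [h] at hu1; exact (not_lt_bot hu1).elim
    set t := u⁻¹ with ht
    have htD : D < t := ENNReal.lt_inv_iff_lt_inv.mp hu2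
    have ht0 : t ≠ 0 := (hD0.trans htD).ne'
    have httop : t ≠ ⊤ := ENNReal.inv_ne_top.mpr hune0
    have hfreq : ∃ᶠ r in 𝓝[>] (0:ℝ),
        μ (BallK x₀ r) / ENNReal.ofReal (φ r) < t := by
      exact Filter.frequently_lt_of_liminf_lt (h := hDf.trans_lt htD)
    have hmem : Set.Ioo (0:ℝ) (min ε 2⁻¹) ∈ 𝓝[>] (0:ℝ) :=
      Ioo_mem_nhdsGT_of_mem ⟨le_refl 0, by positivity⟩
    obtain ⟨r, hfr, hr⟩ :=
      (hfreq.and_eventually (Filter.eventually_of_mem hmem fun x hx => hx)).exists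
    have hr0 : 0 < r := hr.1
    have hrε : r ≤ ε := (hr.2.trans_le (min_le_left _ _)).le
    obtain ⟨m, h1, h2⟩ := exists_level hr0 (hr.2.trans_le (min_le_right _ _)).le
    -- the packing by all cylinders of level m
    have hcardeq : Fintype.card (∀ j : Fin m, Fin (n j)) = ∏ j ∈ Finset.range m, n j := by
      rw [Fintype.card_pi]
      simp only [Fintype.card_fin]
      exact Fin.prod_univ_eq_prod_range (fun j => n j) m
    set N := ∏ j ∈ Finset.range m, n j with hN
    set e : Fin N ≃ (∀ j : Fin m, Fin (n j)) :=
      (Fintype.equivFinOfCardEq (by rw [hcardeq])).symm with he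
    set ext : (∀ j : Fin m, Fin (n j)) → (∀ k, Fin (n k)) :=
      fun a k => if h : k < m then a ⟨k, h⟩ else ⟨0, hn k⟩ with hext
    set c : ℕ → (∀ k, Fin (n k)) × ℝ :=
      fun i => if h : i < N then (ext (e ⟨i, h⟩), r) else (x₀, 0) with hc
    have hcr : ∀ i (h : i < N), c i = (ext (e ⟨i, h⟩), r) := fun i h => dif_pos h
    have hcr' : ∀ i, ¬(i < N) → c i = (x₀, 0) := fun i h => dif_neg h
    have hprop : (∀ i, (c i).1 ∈ (Set.univ : Set (∀ k, Fin (n k))) ∧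
        0 ≤ (c i).2 ∧ (c i).2 ≤ ε) ∧
        Pairwise fun i j => Disjoint (BallK (c i).1 (c i).2) (BallK (c j).1 (c j).2) := by
      constructor
      · intro i
        refine ⟨Set.mem_univ _, ?_⟩
        by_cases h : i < N
        · rw [hcr i h]; exact ⟨hr0.le, hrε⟩
        · rw [hcr' i h]; exact ⟨le_refl 0, hε.le⟩
      · intro i j hij
        by_cases hi : i < N
        · by_cases hj : j < N
          · rw [hcr i hi, hcr j hj]
            have hab : e ⟨i, hi⟩ ≠ e ⟨j, hj⟩ := fun h =>
              hij (congrArg Fin.val (e.injective h))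
            obtain ⟨j₀, hj₀⟩ := Function.ne_iff.mp hab
            rw [ballK_eq_cyl _ h1 h2, ballK_eq_cyl _ h1 h2]
            refine cyl_disjoint (j₀ := j₀.1) j₀.2 ?_
            simpa [hext, dif_pos j₀.2, Fin.eta] using hj₀
          · rw [hcr' j hj]
            simp only
            rw [ballK_empty _ (le_refl (0:ℝ))]
            exact Set.disjoint_empty _
        · rw [hcr' i hi]
          simp only
          rw [ballK_empty _ (le_refl (0:ℝ))]
          exact Set.empty_disjoint _
    -- the sum of the packing
    have hzero : ∀ i ∉ Finset.range N, ENNReal.ofReal (φ (c i).2) = 0 := by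
      intro i hi
      rw [hcr' i (by simpa using hi)]
      simp [hφ.2.2.1]
    have hsum : ∑' i, ENNReal.ofReal (φ (c i).2) = N * ENNReal.ofReal (φ r) := by
      rw [tsum_eq_sum hzero]
      have : ∀ i ∈ Finset.range N, ENNReal.ofReal (φ (c i).2) = ENNReal.ofReal (φ r) := by
        intro i hi
        rw [hcr i (by simpa using hi)]
      rw [Finset.sum_congr rfl this, Finset.sum_const, Finset.card_range, nsmul_eq_mul]
    -- the measure-theoretic lower bound for the sum
    set Mv := ∏ j ∈ Finset.range m, ((n j : ℝ≥0∞))⁻¹ with hMv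
    set Nv := ∏ j ∈ Finset.range m, (n j : ℝ≥0∞) with hNv
    have hMN : Mv * Nv = 1 := by
      rw [hMv, hNv, ← Finset.prod_mul_distrib]
      apply Finset.prod_eq_one
      intro j _
      exact ENNReal.inv_mul_cancel (by exact_mod_cast (hn j).ne') (by simp)
    have hNcard : (N : ℝ≥0∞) = Nv := by
      rw [hN, hNv]
      exact Nat.cast_prod _ _
    have hφr0 : ENNReal.ofReal (φ r) ≠ 0 := by
      simp only [ne_eq, ENNReal.ofReal_eq_zero, not_le]
      exact hφ.2.2.2 _ hr0
    have hflt : Mv / ENNReal.ofReal (φ r) < t := by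
      rw [hMv, ← mu_ball_eq hμ h1 h2 (x := x₀)]
      exact hfr
    have h3 : Mv ≤ t * ENNReal.ofReal (φ r) :=
      ((ENNReal.div_lt_iff (Or.inl hφr0) (Or.inl ENNReal.ofReal_ne_top)).mp hflt).le
    have hbound : t⁻¹ ≤ (N : ℝ≥0∞) * ENNReal.ofReal (φ r) := by
      calc t⁻¹ = t⁻¹ * (Mv * Nv) := by rw [hMN, mul_one]
        _ = (t⁻¹ * Mv) * Nv := by ring
        _ ≤ (t⁻¹ * (t * ENNReal.ofReal (φ r))) * Nv := by
            exact mul_le_mul_left (mul_le_mul_right h3 _) _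
        _ = ((t⁻¹ * t) * ENNReal.ofReal (φ r)) * Nv := by ring
        _ = (1 * ENNReal.ofReal (φ r)) * Nv := by
            rw [ENNReal.inv_mul_cancel ht0 httop]
        _ = (N : ℝ≥0∞) * ENNReal.ofReal (φ r) := by rw [one_mul, hNcard, mul_comm]
    have hle : (∑' i, ENNReal.ofReal (φ (c i).2)) ≤
        ⨆ (c : ℕ → (∀ k, Fin (n k)) × ℝ)
          (_ : (∀ i, (c i).1 ∈ (Set.univ : Set (∀ k, Fin (n k))) ∧
              0 ≤ (c i).2 ∧ (c i).2 ≤ ε) ∧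
            Pairwise fun i j => Disjoint (BallK (c i).1 (c i).2) (BallK (c j).1 (c j).2)),
          ∑' i, ENNReal.ofReal (φ (c i).2) :=
      le_iSup₂ (f := fun (c : ℕ → (∀ k, Fin (n k)) × ℝ) (_ : (∀ i, (c i).1 ∈ (Set.univ : Set (∀ k, Fin (n k))) ∧ 0 ≤ (c i).2 ∧ (c i).2 ≤ ε) ∧ Pairwise fun i j => Disjoint (BallK (c i).1 (c i).2) (BallK (c j).1 (c j).2)) => ∑' i, ENNReal.ofReal (φ (c i).2)) c hprop
    rw [hsum] at hle
    have : u ≤ ⨆ (c : ℕ → (∀ k, Fin (n k)) × ℝ)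
          (_ : (∀ i, (c i).1 ∈ (Set.univ : Set (∀ k, Fin (n k))) ∧
              0 ≤ (c i).2 ∧ (c i).2 ≤ ε) ∧
            Pairwise fun i j => Disjoint (BallK (c i).1 (c i).2) (BallK (c j).1 (c j).2)),
          ∑' i, ENNReal.ofReal (φ (c i).2) := by
      calc u = t⁻¹ := by rw [ht, inv_inv]
        _ ≤ (N : ℝ≥0∞) * ENNReal.ofReal (φ r) := hbound
        _ ≤ _ := hle
    exact absurd this (not_le.mpr hu1)
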